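/- Let r > 0 and w, c > 0, and define f*(α) = r · cosh((1−α)·√(w/c)) / cosh(√(w/c)) for α ∈ [0,1]. Then for every α ∈ [0,1], r − f*(α) = (w/c) · ∫₀^α ( ∫_t¹ f*(u) du ) dt. -/

import Mathlib

private lemma hb_deriv1 (k : ℝ) (hk : k ≠ 0) (u : ℝ) :
    HasDerivAt (fun u : ℝ => -Real.sinh ((1 - u) * k) / k)
      (Real.cosh ((1 - u) * k)) u := by
  have h1 : HasDerivAt (fun u : ℝ => (1 - u) * k) (-k) u := by
    have := ((hasDerivAt_id u).const_sub 1).mul_const k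
    simpa using this
  have h2 := (h1.sinh).neg.div_const k
  refine h2.congr_deriv ?_
  field_simp

private lemma hb_deriv2 (k : ℝ) (hk : k ≠ 0) (t : ℝ) :
    HasDerivAt (fun t : ℝ => -Real.cosh ((1 - t) * k) / (k * k))
      (Real.sinh ((1 - t) * k) / k) t := by
  have h1 : HasDerivAt (fun t : ℝ => (1 - t) * k) (-k) t := by
    have := ((hasDerivAt_id t).const_sub 1).mul_const k
    simpa using this
  have h2 := (h1.cosh).neg.div_const (k * k)
  refine h2.congr_deriv ?_
  field_simp

/-- Euler–Lagrange stationarity identity for the optimal Hotelling boundary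
`f*(α) = r cosh((1−α)√(w/c)) / cosh(√(w/c))`:
`r − f*(α) = (w/c) ∫₀^α (∫_t¹ f*(u) du) dt` for all `α ∈ [0,1]`. -/
theorem hotelling_boundary_stationarity
    (r w c : ℝ) (hr : 0 < r) (hw : 0 < w) (hc : 0 < c)
    (fstar : ℝ → ℝ)
    (hfstar : ∀ α, fstar α =
      r * Real.cosh ((1 - α) * Real.sqrt (w / c)) / Real.cosh (Real.sqrt (w / c))) :
    ∀ α ∈ Set.Icc (0 : ℝ) 1,
      r - fstar α = (w / c) * ∫ t in (0 : ℝ)..α, (∫ u in t..1, fstar u) := by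
  intro α _
  set k : ℝ := Real.sqrt (w / c) with hkdef
  have hk0 : 0 < k := Real.sqrt_pos.mpr (div_pos hw hc)
  have hk : k ≠ 0 := ne_of_gt hk0
  have hwc : w / c = k * k := (Real.mul_self_sqrt (le_of_lt (div_pos hw hc))).symm
  have hch : Real.cosh k ≠ 0 := ne_of_gt (Real.cosh_pos k)
  -- inner integral
  have hinner : ∀ t : ℝ, (∫ u in t..1, fstar u)
      = (r / Real.cosh k) * (Real.sinh ((1 - t) * k) / k) := by
    intro t
    have hcont : Continuous fun u : ℝ => Real.cosh ((1 - u) * k) :=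
      (Real.continuous_cosh.comp ((continuous_const.sub continuous_id).mul continuous_const))
    have h1 : (∫ u in t..1, Real.cosh ((1 - u) * k))
        = (-Real.sinh ((1 - (1:ℝ)) * k) / k) - (-Real.sinh ((1 - t) * k) / k) := by
      exact intervalIntegral.integral_eq_sub_of_hasDerivAt
        (fun u _ => hb_deriv1 k hk u) (hcont.intervalIntegrable t 1)
    have h2 : (∫ u in t..1, fstar u)
        = (r / Real.cosh k) * ∫ u in t..1, Real.cosh ((1 - u) * k) := by
      rw [← intervalIntegral.integral_const_mul]
      apply intervalIntegral.integral_congr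
      intro u _
      rw [hfstar u]; field_simp
    rw [h2, h1]; simp [Real.sinh_zero]; ring
  have hcont2 : Continuous fun t : ℝ => Real.sinh ((1 - t) * k) / k :=
    ((Real.continuous_sinh.comp ((continuous_const.sub continuous_id).mul continuous_const)).div_const k)
  have houter : (∫ t in (0:ℝ)..α, Real.sinh ((1 - t) * k) / k)
      = (-Real.cosh ((1 - α) * k) / (k * k)) - (-Real.cosh ((1 - (0:ℝ)) * k) / (k * k)) :=
    intervalIntegral.integral_eq_sub_of_hasDerivAt
      (fun t _ => hb_deriv2 k hk t) (hcont2.intervalIntegrable 0 α)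
  have hout2 : (∫ t in (0:ℝ)..α, (∫ u in t..1, fstar u))
      = (r / Real.cosh k) * ∫ t in (0:ℝ)..α, Real.sinh ((1 - t) * k) / k := by
    rw [← intervalIntegral.integral_const_mul]
    apply intervalIntegral.integral_congr
    intro t _
    exact hinner t
  rw [hout2, houter, hfstar α, hwc]
  field_simp
  ring
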